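/- Let f : {0,1}^{ℤ^d} → {0,1} be a standard transition function such that σ_0 is empty. Then there exist a natural number m ≤ d+1 and affine functions φ_1,…,φ_m : ℝ^d → ℝ such that (i) for every j ∈ {1,…,m} the set {i ∈ ℤ^d : φ_j(i) ≤ 0} is a zero-set for f, (ii) φ_1 + ⋯ + φ_m is identically equal to a positive constant, and (iii) there is a point p ∈ ℝ^d with rational coordinates such that φ_j(p) > 0 for all j. -/

import Mathlib

open MeasureTheory ENNReal

namespace CAPaper

/-- Sites of the lattice `ℤ^d`. -/
abbrev Site (d : ℕ) := Fin d → ℤ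

/-- Configurations `{0,1}^{ℤ^d}`, values in `Bool` (`false` = 0, `true` = 1). -/
abbrev Config (d : ℕ) := Site d → Bool

/-- Euclidean norm on `ℝ^d`. -/
noncomputable def enorm {d : ℕ} (v : Fin d → ℝ) : ℝ := Real.sqrt (∑ k, v k ^ 2)

/-- Euclidean scalar product on `ℝ^d`. -/
noncomputable def edot {d : ℕ} (u v : Fin d → ℝ) : ℝ := ∑ k, u k * v k

/-- The embedding `ℤ^d → ℝ^d`. -/
def embed {d : ℕ} (i : Site d) : Fin d → ℝ := fun k => (i k : ℝ)

/-- Euclidean norm of a lattice point. -/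
noncomputable def enormZ {d : ℕ} (i : Site d) : ℝ := enorm (embed i)

open Classical in
/-- `Conf S` is the configuration whose indicator is `S`. -/
noncomputable def Conf {d : ℕ} (S : Set (Site d)) : Config d :=
  fun i => if i ∈ S then true else false

/-- `f` is local with support `Δ`. -/
def IsLocal {d : ℕ} (f : Config d → Bool) (Δ : Finset (Site d)) : Prop :=
  ∀ x y : Config d, (∀ i ∈ Δ, x i = y i) → f x = f y

/-- `f` is monotonic. -/
def Monotonic {d : ℕ} (f : Config d → Bool) : Prop :=
  ∀ x y : Config d, (∀ i, x i ≤ y i) → f x ≤ f y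

/-- `f` is a standard transition function with support `Δ`. -/
def Standard {d : ℕ} (f : Config d → Bool) (Δ : Finset (Site d)) : Prop :=
  IsLocal f Δ ∧ Monotonic f ∧ ∃ x y : Config d, f x ≠ f y

/-- The deterministic cellular automaton `D_f`. -/
def Df {d : ℕ} (f : Config d → Bool) (x : Config d) : Config d :=
  fun i => f (fun j => x (i + j))

/-- The invariant configuration `x` attracts `D`. -/
def Attracts {d : ℕ} (D : Config d → Config d) (x : Config d) : Prop :=
  D x = x ∧ ∀ y : Config d, {i | y i ≠ x i}.Finite → ∃ t : ℕ, D^[t] y = x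

/-- `D_f` has velocity `V` in the direction `p`. -/
def HasVelocity {d : ℕ} (f : Config d → Bool) (p : Fin d → ℝ) (V : ℝ) : Prop :=
  ∀ C : ℝ, Df f (Conf {i | edot (embed i) p ≤ C}) = Conf {i | edot (embed i) p ≤ C + V}

/-- Probability that, after the one-sided noise with parameter `ε` is applied to a
configuration whose value at a given site is `xi`, that site carries the value `b`. -/
noncomputable def noiseProb (ε : ℝ) (xi b : Bool) : ℝ≥0∞ :=
  if xi then (if b then 1 else 0)
  else (if b then ENNReal.ofReal ε else ENNReal.ofReal (1 - ε))

/-- `ν` is the result of one step of the stochastic automaton `N_ε D` applied to `μ`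
(first apply `D`, then independent one-sided noise at every site); since the noise measure
is a product measure, this is equivalent to specifying all cylinder probabilities of `ν`. -/
def IsStep {ι : Type*} (ε : ℝ) (D : (ι → Bool) → (ι → Bool)) (μ ν : Measure (ι → Bool)) : Prop :=
  ∀ (Λ : Finset ι) (b : ι → Bool),
    ν {y | ∀ i ∈ Λ, y i = b i} = ∫⁻ x, ∏ i ∈ Λ, noiseProb ε (D x i) (b i) ∂μ

/-- `μ` is invariant for the stochastic automaton `N_ε D`. -/
def Invariant {ι : Type*} (ε : ℝ) (D : (ι → Bool) → (ι → Bool)) (μ : Measure (ι → Bool)) : Prop :=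
  IsStep ε D μ μ

/-- The cylinder event: all sites of `Λ` carry the value 1. -/
def ones {ι : Type*} (Λ : Set ι) : Set (ι → Bool) := {x | ∀ i ∈ Λ, x i = true}


/-- `S` is a zero-set for `f`: `f` evaluates to 0 on the configuration whose indicator
is the complement of `S`. -/
def ZeroSet {d : ℕ} (f : Config d → Bool) (S : Set (Site d)) : Prop :=
  f (Conf Sᶜ) = false

/-- `σ₀`: the intersection of the convex hulls (in `ℝ^d`) of all zero-sets of `f`. -/
noncomputable def sigma0 {d : ℕ} (f : Config d → Bool) : Set (Fin d → ℝ) :=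
  ⋂ S ∈ {S : Set (Site d) | ZeroSet f S}, convexHull ℝ (embed '' S)

/-- `φ : ℝ^d → ℝ` is an affine function. -/
def IsAffine {d : ℕ} (φ : (Fin d → ℝ) → ℝ) : Prop :=
  ∃ (a : Fin d → ℝ) (b : ℝ), ∀ x, φ x = edot a x + b


/-! ### Auxiliary lemmas -/

lemma edot_self_nonneg {d : ℕ} (v : Fin d → ℝ) : 0 ≤ edot v v :=
  Finset.sum_nonneg fun i _ => mul_self_nonneg _

lemma edot_self_eq_zero {d : ℕ} {v : Fin d → ℝ} (h : edot v v = 0) : v = 0 := by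
  funext i
  have := (Finset.sum_eq_zero_iff_of_nonneg (fun i _ => mul_self_nonneg (v i))).1 h i
    (Finset.mem_univ i)
  exact mul_self_eq_zero.1 this

lemma edot_sub_right {d : ℕ} (u x y : Fin d → ℝ) : edot u (x - y) = edot u x - edot u y := by
  simp [edot, mul_sub, Finset.sum_sub_distrib]

/-- Key geometric lemma: for a finite family of compact convex nonempty sets with empty
intersection, take `k j` minimizing the sum of squared distances to the centroid `a`. -/
lemma exists_witness {d n : ℕ} (C : Fin n → Set (Fin d → ℝ))
    (hconv : ∀ j, Convex ℝ (C j)) (hcomp : ∀ j, IsCompact (C j))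
    (hne : ∀ j, (C j).Nonempty) (hempty : (⋂ j, C j) = ∅) :
    ∃ (a : Fin d → ℝ) (k : Fin n → Fin d → ℝ),
      (∀ j, k j ∈ C j) ∧
      (∀ j, ∀ y ∈ C j, edot (a - k j) (y - k j) ≤ 0) ∧
      (∀ i, ∑ j, (a i - k j i) = 0) ∧
      0 < ∑ j, edot (a - k j) (a - k j) := by
  classical
  have hn : 0 < n := by
    rcases Nat.eq_zero_or_pos n with h | h
    · exfalso
      subst h
      rw [Set.iInter_of_empty] at hempty
      exact (Set.univ_nonempty (α := Fin d → ℝ)).ne_empty hempty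
    · exact h
  have hn0 : (n : ℝ) ≠ 0 := Nat.cast_ne_zero.2 hn.ne'
  -- minimize H over the product of the sets
  have hK : IsCompact (Set.univ.pi C) := isCompact_univ_pi hcomp
  have hKne : (Set.univ.pi C).Nonempty :=
    ⟨fun j => (hne j).some, fun j _ => (hne j).some_mem⟩
  set H : (Fin n → Fin d → ℝ) → ℝ :=
    fun k => (∑ j, ∑ i, (k j i) ^ 2) - (n : ℝ)⁻¹ * ∑ i, (∑ j, k j i) ^ 2 with hH
  have hHcont : Continuous H := by
    apply Continuous.sub
    · apply continuous_finset_sum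
      intro j _
      apply continuous_finset_sum
      intro i _
      exact ((continuous_apply i).comp (continuous_apply j)).pow 2
    · apply Continuous.mul continuous_const
      apply continuous_finset_sum
      intro i _
      exact (continuous_finset_sum _ fun j _ =>
        (continuous_apply i).comp (continuous_apply j)).pow 2
  obtain ⟨k, hkK, hkmin⟩ := hK.exists_isMinOn hKne hHcont.continuousOn
  have hk : ∀ j, k j ∈ C j := fun j => hkK j (Set.mem_univ j)
  set a : Fin d → ℝ := fun i => (n : ℝ)⁻¹ * ∑ j, k j i with ha
  have hcent : ∀ i, ∑ j, (a i - k j i) = 0 := by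
    intro i
    rw [Finset.sum_sub_distrib, Finset.sum_const, Finset.card_univ, Fintype.card_fin,
      nsmul_eq_mul, ha]
    field_simp
    ring
  refine ⟨a, k, hk, ?_, hcent, ?_⟩
  · -- variational inequality
    intro j0 y hy
    set v : Fin d → ℝ := fun i => y i - k j0 i with hv
    set S1 : ℝ := ∑ i, k j0 i * v i with hS1
    set S2 : ℝ := ∑ i, (∑ j, k j i) * v i with hS2
    set Q : ℝ := ∑ i, (v i) ^ 2 with hQ
    set r : ℝ := S1 - (n : ℝ)⁻¹ * S2 with hrdef
    have hgoal : edot (a - k j0) (y - k j0) = -r := by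
      rw [hrdef, hS1, hS2, edot, Finset.mul_sum, ← Finset.sum_sub_distrib,
        ← Finset.sum_neg_distrib]
      apply Finset.sum_congr rfl
      intro i _
      simp only [Pi.sub_apply, hv, ha]
      ring
    have key : ∀ t : ℝ, 0 < t → t ≤ 1 →
        0 ≤ 2 * t * r + t ^ 2 * (1 - (n : ℝ)⁻¹) * Q := by
      intro t ht0 ht1
      set w : Fin d → ℝ := fun i => k j0 i + t * v i with hw
      set k' := Function.update k j0 w with hk'
      have hk'K : k' ∈ Set.univ.pi C := by
        intro j _
        by_cases hj : j = j0
        · subst hj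
          rw [hk', Function.update_self]
          have hw2 : w = (1 - t) • k j + t • y := by
            funext i
            simp only [hw, Pi.add_apply, Pi.smul_apply, smul_eq_mul, hv]
            ring
          rw [hw2]
          exact hconv j (hk j) hy (by linarith) ht0.le (by ring)
        · rw [hk', Function.update_of_ne hj]
          exact hk j
      have hsum1 : ∑ j, ∑ i, (k' j i) ^ 2
          = (∑ j, ∑ i, (k j i) ^ 2) + (∑ i, (w i) ^ 2 - ∑ i, (k j0 i) ^ 2) := by
        have h1 : (fun j => ∑ i, (k' j i) ^ 2)
            = Function.update (fun j => ∑ i, (k j i) ^ 2) j0 (∑ i, (w i) ^ 2) := by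
          funext j
          by_cases hj : j = j0
          · subst hj; simp [hk', Function.update_self]
          · simp [hk', Function.update_of_ne hj]
        calc ∑ j, ∑ i, (k' j i) ^ 2
            = ∑ j, (Function.update (fun j => ∑ i, (k j i) ^ 2) j0 (∑ i, (w i) ^ 2)) j := by
              rw [← h1]
          _ = (∑ i, (w i) ^ 2) + ∑ j ∈ Finset.univ.erase j0, ∑ i, (k j i) ^ 2 := by
              rw [Finset.sum_update_of_mem (Finset.mem_univ j0),
                Finset.sdiff_singleton_eq_erase]
          _ = (∑ j, ∑ i, (k j i) ^ 2) + (∑ i, (w i) ^ 2 - ∑ i, (k j0 i) ^ 2) := by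
              have h2 := Finset.add_sum_erase Finset.univ (fun j => ∑ i, (k j i) ^ 2)
                (Finset.mem_univ j0)
              linarith
      have hsum2 : ∀ i, ∑ j, k' j i = (∑ j, k j i) + t * v i := by
        intro i
        have h1 : (fun j => k' j i) = Function.update (fun j => k j i) j0 (w i) := by
          funext j
          by_cases hj : j = j0
          · subst hj; simp [hk', Function.update_self]
          · simp [hk', Function.update_of_ne hj]
        calc ∑ j, k' j i = ∑ j, (Function.update (fun j => k j i) j0 (w i)) j := by rw [← h1]
          _ = w i + ∑ j ∈ Finset.univ.erase j0, k j i := by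
              rw [Finset.sum_update_of_mem (Finset.mem_univ j0),
                Finset.sdiff_singleton_eq_erase]
          _ = (∑ j, k j i) + t * v i := by
              have h2 := Finset.add_sum_erase Finset.univ (fun j => k j i) (Finset.mem_univ j0)
              have hw3 : w i = k j0 i + t * v i := rfl
              linarith
      have hA : ∑ i, (w i) ^ 2 = (∑ i, (k j0 i) ^ 2) + (2 * t * S1 + t ^ 2 * Q) := by
        have : ∀ i, (w i) ^ 2 = (k j0 i) ^ 2 + ((2 * t) * (k j0 i * v i) + t ^ 2 * (v i) ^ 2) := by
          intro i
          have hw3 : w i = k j0 i + t * v i := rfl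
          rw [hw3]; ring
        rw [Finset.sum_congr rfl fun i _ => this i]
        rw [Finset.sum_add_distrib, Finset.sum_add_distrib, ← Finset.mul_sum, ← Finset.mul_sum,
          ← hS1, ← hQ]
      have hB : ∑ i, (∑ j, k' j i) ^ 2
          = (∑ i, (∑ j, k j i) ^ 2) + (2 * t * S2 + t ^ 2 * Q) := by
        have : ∀ i, (∑ j, k' j i) ^ 2
            = (∑ j, k j i) ^ 2 + ((2 * t) * ((∑ j, k j i) * v i) + t ^ 2 * (v i) ^ 2) := by
          intro i
          rw [hsum2 i]; ring
        rw [Finset.sum_congr rfl fun i _ => this i]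
        rw [Finset.sum_add_distrib, Finset.sum_add_distrib, ← Finset.mul_sum, ← Finset.mul_sum,
          ← hS2, ← hQ]
      have hHk' : H k' = H k + (2 * t * r + t ^ 2 * (1 - (n : ℝ)⁻¹) * Q) := by
        rw [hH]
        simp only
        rw [hsum1, hB, hA, hrdef]
        ring
      have hle := isMinOn_iff.mp hkmin k' hk'K
      linarith [hHk' ▸ hle]
    rw [hgoal, neg_nonpos]
    by_contra hcon
    push_neg at hcon
    have hQ0 : 0 ≤ Q := Finset.sum_nonneg fun i _ => sq_nonneg _
    have hM0 : 0 ≤ (1 - (n : ℝ)⁻¹) := by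
      have h1 : (n : ℝ)⁻¹ ≤ 1 := by
        apply inv_le_one_of_one_le₀
        exact_mod_cast hn
      linarith
    set M : ℝ := (1 - (n : ℝ)⁻¹) * Q with hMdef
    have hM : 0 ≤ M := mul_nonneg hM0 hQ0
    set t : ℝ := min 1 (-r / (M + 1)) with htdef
    have ht0 : 0 < t := lt_min one_pos (div_pos (neg_pos.2 hcon) (by linarith))
    have ht1 : t ≤ 1 := min_le_left _ _
    have h2 : t * (M + 1) ≤ -r := by
      have h3 : t ≤ -r / (M + 1) := min_le_right _ _
      rwa [le_div_iff₀ (by linarith)] at h3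
    have hkey := key t ht0 ht1
    have hkey' : 0 ≤ 2 * t * r + t ^ 2 * M := by
      rw [hMdef, ← mul_assoc]
      exact hkey
    nlinarith [mul_le_mul_of_nonneg_left h2 ht0.le, mul_pos ht0 (neg_pos.2 hcon),
      mul_pos ht0 ht0]
  · -- positivity
    by_contra hcon
    push_neg at hcon
    have hzero : ∀ j ∈ Finset.univ (α := Fin n), edot (a - k j) (a - k j) = 0 := by
      have hsum0 : ∑ j, edot (a - k j) (a - k j) = 0 :=
        le_antisymm hcon (Finset.sum_nonneg fun j _ => edot_self_nonneg _)
      exact (Finset.sum_eq_zero_iff_of_nonneg fun j _ => edot_self_nonneg _).1 hsum0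
    have hak : ∀ j, a ∈ C j := by
      intro j
      have h1 : a - k j = 0 := edot_self_eq_zero (hzero j (Finset.mem_univ j))
      have h2 : a = k j := by
        funext i
        have := congrFun h1 i
        simp only [Pi.sub_apply, Pi.zero_apply] at this
        linarith
      rw [h2]; exact hk j
    have : a ∈ ⋂ j, C j := Set.mem_iInter.2 hak
    rw [hempty] at this
    exact this

/-- if `σ₀` is empty, there exist `m ≤ d+1` affine functions with the
stated properties. -/
theorem stmt3 (d : ℕ) (f : Config d → Bool) (Δ : Finset (Site d))
    (hf : Standard f Δ) (hσ : sigma0 f = ∅) :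
    ∃ m : ℕ, m ≤ d + 1 ∧ ∃ φ : Fin m → (Fin d → ℝ) → ℝ,
      (∀ j, IsAffine (φ j)) ∧
      (∀ j, ZeroSet f {i | φ j (embed i) ≤ 0}) ∧
      (∃ c : ℝ, 0 < c ∧ ∀ x, ∑ j, φ j x = c) ∧
      (∃ p : Fin d → ℚ, ∀ j, 0 < φ j (fun k => (p k : ℝ))) := by
  classical
  obtain ⟨hloc, hmono, x0, y0, hx0y0⟩ := hf
  -- basic boolean facts
  have htop : f (fun _ => true) = true := by
    by_contra h
    have h' : f (fun _ => true) = false := by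
      revert h; cases (f (fun _ => true)) <;> simp
    have hall : ∀ z, f z = false := by
      intro z
      have hle := hmono z (fun _ => true) (fun i => Bool.le_true _)
      rw [h'] at hle
      cases hfz : f z
      · rfl
      · rw [hfz] at hle; exact absurd hle (by decide)
    exact hx0y0 (by rw [hall x0, hall y0])
  have hConf_univ : Conf (Set.univ : Set (Site d)) = fun _ => true :=
    funext fun i => if_pos trivial
  -- zero-sets are upward closed
  have hzero_mono : ∀ S T : Set (Site d), ZeroSet f S → S ⊆ T → ZeroSet f T := by
    intro S T hS hST
    unfold ZeroSet at *
    have hle : ∀ i, Conf Tᶜ i ≤ Conf Sᶜ i := by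
      intro i
      by_cases hiT : i ∈ T
      · have h1 : Conf Tᶜ i = false := by simp [Conf, hiT]
        rw [h1]; exact Bool.false_le _
      · have hiS : i ∉ S := fun h => hiT (hST h)
        have h1 : Conf Tᶜ i = true := by simp [Conf, hiT]
        have h2 : Conf Sᶜ i = true := by simp [Conf, hiS]
        rw [h1, h2]
    have hle2 := hmono _ _ hle
    rw [hS] at hle2
    cases h' : f (Conf Tᶜ)
    · rfl
    · rw [h'] at hle2; exact absurd hle2 (by decide)
  -- zero-sets are nonempty
  have hzero_ne : ∀ S : Set (Site d), ZeroSet f S → S.Nonempty := by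
    intro S hS
    rcases S.eq_empty_or_nonempty with h | h
    · exfalso
      rw [h] at hS
      unfold ZeroSet at hS
      rw [Set.compl_empty, hConf_univ, htop] at hS
      simp at hS
    · exact h
  -- restriction of zero-sets to the support
  have hzero_inter : ∀ T : Set (Site d), ZeroSet f T → ZeroSet f ((↑Δ : Set (Site d)) ∩ T) := by
    intro T hT
    unfold ZeroSet at *
    rw [← hT]
    apply hloc
    intro i hiΔ
    by_cases hiT : i ∈ T <;> simp [Conf, hiΔ, hiT]
  -- the finite family of zero-sets inside the support
  set 𝒮 : Finset (Finset (Site d)) :=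
    Δ.powerset.filter (fun S => ZeroSet f (↑S : Set (Site d))) with h𝒮
  have hFinEmpty : (⋂ S ∈ 𝒮, convexHull ℝ (embed '' (↑S : Set (Site d)))) = ∅ := by
    rw [Set.eq_empty_iff_forall_notMem]
    intro x hx
    have hx2 : x ∈ sigma0 f := by
      rw [sigma0]
      refine Set.mem_iInter₂.2 ?_
      intro T hT
      set S0 : Finset (Site d) := Δ.filter (fun i => i ∈ T) with hS0def
      have hS0coe : (↑S0 : Set (Site d)) = (↑Δ : Set (Site d)) ∩ T := by
        ext i; simp [hS0def]
      have hS0zero : ZeroSet f (↑S0 : Set (Site d)) := by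
        rw [hS0coe]; exact hzero_inter T hT
      have hS0mem : S0 ∈ 𝒮 :=
        Finset.mem_filter.2 ⟨Finset.mem_powerset.2 (Finset.filter_subset _ _), hS0zero⟩
      have hx0 : x ∈ convexHull ℝ (embed '' (↑S0 : Set (Site d))) :=
        Set.mem_iInter₂.1 hx S0 hS0mem
      refine convexHull_mono (Set.image_mono ?_) hx0
      rw [hS0coe]; exact Set.inter_subset_right
    rw [hσ] at hx2
    exact hx2
  have hrank : Module.finrank ℝ (Fin d → ℝ) = d := by
    rw [Module.finrank_fintype_fun_eq_card, Fintype.card_fin]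
  -- extract a small subfamily by Helly's theorem
  have hHelly : ∃ I : Finset (Finset (Site d)), I ⊆ 𝒮 ∧ I.card ≤ d + 1 ∧
      (⋂ S ∈ I, convexHull ℝ (embed '' (↑S : Set (Site d)))) = ∅ := by
    by_contra hcon
    push_neg at hcon
    have hne : (⋂ S ∈ 𝒮, convexHull ℝ (embed '' (↑S : Set (Site d)))).Nonempty := by
      apply Convex.helly_theorem' (𝕜 := ℝ)
        (F := fun S : Finset (Site d) => convexHull ℝ (embed '' (↑S : Set (Site d))))
      · intro S _; exact convex_convexHull _ _
      · intro I hIs hIc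
        rw [hrank] at hIc
        exact hcon I hIs hIc
    exact hne.ne_empty hFinEmpty
  obtain ⟨I, hI𝒮, hIcard, hIempty⟩ := hHelly
  set n := I.card with hn
  set eI : Fin n ≃ {S // S ∈ I} := I.equivFin.symm with heI
  set Sfun : Fin n → Finset (Site d) := fun j => ((eI j : {S // S ∈ I}) : Finset (Site d))
    with hSfun
  have hSzero : ∀ j, ZeroSet f (↑(Sfun j) : Set (Site d)) := by
    intro j
    exact (Finset.mem_filter.1 (hI𝒮 (eI j).2)).2
  set C : Fin n → Set (Fin d → ℝ) :=
    fun j => convexHull ℝ (embed '' (↑(Sfun j) : Set (Site d))) with hC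
  have hCconv : ∀ j, Convex ℝ (C j) := fun j => convex_convexHull _ _
  have hCcomp : ∀ j, IsCompact (C j) := fun j =>
    ((Sfun j).finite_toSet.image _).isCompact_convexHull ℝ
  have hCne : ∀ j, (C j).Nonempty := by
    intro j
    rw [hC]
    rw [convexHull_nonempty_iff]
    exact (hzero_ne _ (hSzero j)).image _
  have hCempty : (⋂ j, C j) = ∅ := by
    rw [Set.eq_empty_iff_forall_notMem] at hIempty ⊢
    intro x hx
    apply hIempty x
    refine Set.mem_iInter₂.2 ?_
    intro S hS
    have h1 : Sfun (eI.symm ⟨S, hS⟩) = S := by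
      simp [hSfun]
    rw [← h1]
    exact Set.mem_iInter.1 hx _
  obtain ⟨a, k, hk, hvar, hcent, hpos⟩ := exists_witness C hCconv hCcomp hCne hCempty
  set w : Fin n → Fin d → ℝ := fun j => a - k j with hw
  set ψ : Fin n → (Fin d → ℝ) → ℝ := fun j x => edot (w j) x - edot (w j) (k j) with hψ
  have hψ_eq : ∀ j x, ψ j x = edot (w j) (x - k j) := by
    intro j x
    rw [edot_sub_right]
  have hψ_var : ∀ j, ∀ y ∈ C j, ψ j y ≤ 0 := by
    intro j y hy
    rw [hψ_eq]
    exact hvar j y hy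
  have hψ_a : ∀ j, ψ j a = edot (w j) (w j) := by
    intro j
    rw [hψ_eq]
  -- the sum of all ψ's is constant
  have hzero_pair : ∀ x : Fin d → ℝ, ∑ j, edot (w j) x = 0 := by
    intro x
    have h1 : ∑ j, edot (w j) x = ∑ i, (∑ j, (a i - k j i)) * x i := by
      have h0 : ∑ j, edot (w j) x = ∑ j, ∑ i, (a i - k j i) * x i := by
        apply Finset.sum_congr rfl
        intro j _
        simp only [edot, hw, Pi.sub_apply]
      rw [h0, Finset.sum_comm]
      apply Finset.sum_congr rfl
      intro i _
      rw [Finset.sum_mul]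
    rw [h1]
    apply Finset.sum_eq_zero
    intro i _
    rw [hcent i, zero_mul]
  have hψ_sum : ∀ x, ∑ j, ψ j x = ∑ j, edot (w j) (w j) := by
    intro x
    have h1 : ∑ j, ψ j x = - ∑ j, edot (w j) (k j) := by
      simp only [hψ]
      rw [Finset.sum_sub_distrib, hzero_pair x]
      ring
    have h2 : ∑ j, edot (w j) (w j) = - ∑ j, edot (w j) (k j) := by
      have h3 : ∀ j, edot (w j) (w j) = edot (w j) a - edot (w j) (k j) := by
        intro j
        have h4 : edot (w j) (w j) = edot (w j) (a - k j) := rfl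
        rw [h4, edot_sub_right]
      rw [Finset.sum_congr rfl fun j _ => h3 j, Finset.sum_sub_distrib, hzero_pair a]
      ring
    rw [h1, h2]
  set c : ℝ := ∑ j, edot (w j) (w j) with hc
  have hcpos : 0 < c := hpos
  -- keep only the nonzero functionals
  set J' : Finset (Fin n) := Finset.univ.filter (fun j => 0 < edot (w j) (w j)) with hJ'
  have hJ'zero : ∀ j, j ∉ J' → ∀ x, ψ j x = 0 := by
    intro j hj x
    have h1 : ¬ (0 < edot (w j) (w j)) := by
      intro h; exact hj (Finset.mem_filter.2 ⟨Finset.mem_univ j, h⟩)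
    have h2 : edot (w j) (w j) = 0 := le_antisymm (not_lt.1 h1) (edot_self_nonneg _)
    have h3 : w j = 0 := edot_self_eq_zero h2
    simp only [hψ, h3]
    simp [edot]
  have hψ_sumJ' : ∀ x, ∑ j ∈ J', ψ j x = c := by
    intro x
    have h1 := Finset.sum_filter_add_sum_filter_not Finset.univ
      (fun j => 0 < edot (w j) (w j)) (fun j => ψ j x)
    have h2 : ∑ j ∈ Finset.univ.filter (fun j => ¬ 0 < edot (w j) (w j)), ψ j x = 0 := by
      apply Finset.sum_eq_zero
      intro j hj
      apply hJ'zero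
      · intro hj2
        have := (Finset.mem_filter.1 hj).2
        exact this (Finset.mem_filter.1 hj2).2
    rw [hJ']
    have h3 := hψ_sum x
    rw [← h3, ← h1, h2, add_zero]
  have hJ'pos : ∀ j ∈ J', 0 < ψ j a := by
    intro j hj
    rw [hψ_a]
    exact (Finset.mem_filter.1 hj).2
  have hJ'ne : J'.Nonempty := by
    by_contra hcon
    rw [Finset.not_nonempty_iff_eq_empty] at hcon
    have := hψ_sumJ' a
    rw [hcon, Finset.sum_empty] at this
    linarith
  -- the rational point
  set δ : ℝ := J'.inf' hJ'ne (fun j => edot (w j) (w j) / (∑ i, |w j i| + 1)) with hδ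
  have hBpos : ∀ j, (0:ℝ) < ∑ i, |w j i| + 1 := by
    intro j
    have : (0:ℝ) ≤ ∑ i, |w j i| := Finset.sum_nonneg fun i _ => abs_nonneg _
    linarith
  have hδpos : 0 < δ := by
    rw [hδ, Finset.lt_inf'_iff]
    intro j hj
    exact div_pos (Finset.mem_filter.1 hj).2 (hBpos j)
  have hqex : ∀ i : Fin d, ∃ q : ℚ, |a i - (q:ℝ)| < δ := fun i => exists_rat_near (a i) hδpos
  choose q hq using hqex
  set pR : Fin d → ℝ := fun i => (q i : ℝ) with hpR
  have hp_pos : ∀ j ∈ J', 0 < ψ j pR := by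
    intro j hj
    have h1 : ψ j pR - ψ j a = edot (w j) (pR - a) := by
      simp only [hψ]
      rw [edot_sub_right]
      ring
    have h2 : |edot (w j) (pR - a)| ≤ (∑ i, |w j i|) * δ := by
      rw [edot]
      calc |∑ i, w j i * (pR - a) i| ≤ ∑ i, |w j i * (pR - a) i| :=
            Finset.abs_sum_le_sum_abs _ _
        _ ≤ ∑ i, |w j i| * δ := by
            apply Finset.sum_le_sum
            intro i _
            rw [abs_mul]
            apply mul_le_mul_of_nonneg_left _ (abs_nonneg _)
            have h3 := hq i
            have h4 : |(pR - a) i| = |a i - (q i : ℝ)| := by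
              rw [hpR]
              simp only [Pi.sub_apply]
              rw [abs_sub_comm]
            rw [h4]
            exact h3.le
        _ = (∑ i, |w j i|) * δ := by rw [Finset.sum_mul]
    have h5 : δ * (∑ i, |w j i| + 1) ≤ edot (w j) (w j) := by
      have h6 : δ ≤ edot (w j) (w j) / (∑ i, |w j i| + 1) :=
        Finset.inf'_le _ hj
      rwa [le_div_iff₀ (hBpos j)] at h6
    have h7 := hψ_a j
    have h8 := neg_abs_le (edot (w j) (pR - a))
    rw [mul_add, mul_one] at h5
    rw [mul_comm] at h2
    linarith
  -- assemble the final data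
  set m := J'.card with hm
  have hmle : m ≤ d + 1 := by
    have h1 : J'.card ≤ Finset.univ.card := Finset.card_filter_le _ _
    rw [Finset.card_univ, Fintype.card_fin] at h1
    omega
  set eJ : Fin m ≃ {j // j ∈ J'} := J'.equivFin.symm with heJ
  refine ⟨m, hmle, fun t => ψ ((eJ t : {j // j ∈ J'}) : Fin n), ?_, ?_, ?_, ?_⟩
  · intro t
    exact ⟨w ((eJ t : {j // j ∈ J'}) : Fin n),
      - edot (w ((eJ t : {j // j ∈ J'}) : Fin n)) (k ((eJ t : {j // j ∈ J'}) : Fin n)),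
      fun x => by simp only [hψ]; ring⟩
  · intro t
    set j : Fin n := ((eJ t : {j // j ∈ J'}) : Fin n) with hj
    apply hzero_mono (↑(Sfun j) : Set (Site d)) _ (hSzero j)
    intro i hi
    have h1 : embed i ∈ C j := by
      rw [hC]
      exact subset_convexHull _ _ (Set.mem_image_of_mem _ hi)
    exact hψ_var j _ h1
  · refine ⟨c, hcpos, ?_⟩
    intro x
    have h1 : ∑ t : Fin m, ψ ((eJ t : {j // j ∈ J'}) : Fin n) x
        = ∑ j ∈ J', ψ j x := by
      rw [← Finset.sum_coe_sort J' (fun j => ψ j x)]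
      exact Fintype.sum_equiv eJ _ _ (fun t => rfl)
    rw [h1]
    exact hψ_sumJ' x
  · refine ⟨q, ?_⟩
    intro t
    exact hp_pos _ (eJ t).2

end CAPaper
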